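/- If F is β-smooth for some β > 0, then for every w ∈ ℝ^d, every step size γ > 0, and every batch size B ≥ 1, the expected one-step mini-batch SGD descent satisfies E_s[F(w − γ g_s(w))] ≤ F(w) − γ‖∇F(w)‖² + (βγ²/2)·(M²(w)/B + ((B − 1)/B)·‖∇F(w)‖²). -/

import Mathlib

open scoped BigOperators RealInnerProductSpace

section Aux

variable {E : Type*} [NormedAddCommGroup E] [InnerProductSpace ℝ E] [CompleteSpace E]

lemma descent_aux (F : E → ℝ) (β : ℝ)
    (hFdiff : Differentiable ℝ F)
    (hsmooth : ∀ x y, ‖gradient F x - gradient F y‖ ≤ β * ‖x - y‖)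
    (x y : E) :
    F y ≤ F x + ⟪gradient F x, y - x⟫ + β / 2 * ‖y - x‖ ^ 2 := by
  set v := y - x with hv
  have hgradF : ∀ p : E, HasFDerivAt F (InnerProductSpace.toDual ℝ E (gradient F p)) p :=
    fun p => hasGradientAt_iff_hasFDerivAt.mp (hFdiff p).hasGradientAt
  have hline : ∀ t : ℝ, HasDerivAt (fun t : ℝ => x + t • v) v t := by
    intro t
    simpa using ((hasDerivAt_id t).smul_const v).const_add x
  have hφ : ∀ t : ℝ, HasDerivAt (fun t : ℝ => F (x + t • v)) ⟪gradient F (x + t • v), v⟫ t := by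
    intro t
    have := (hgradF (x + t • v)).comp_hasDerivAt t (hline t)
    simpa [InnerProductSpace.toDual_apply_apply, Function.comp_def] using this
  set c1 : ℝ := ⟪gradient F x, v⟫ with hc1
  set ψ : ℝ → ℝ := fun t => F (x + t • v) - t * c1 - β / 2 * ‖v‖ ^ 2 * t ^ 2 with hψdef
  have hψ : ∀ t : ℝ, HasDerivAt ψ (⟪gradient F (x + t • v), v⟫ - c1 - β * ‖v‖ ^ 2 * t) t := by
    intro t
    have h1 := ((hφ t).sub ((hasDerivAt_id t).mul_const c1)).sub
      ((hasDerivAt_pow 2 t).const_mul (β / 2 * ‖v‖ ^ 2))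
    exact h1.congr_deriv (by push_cast; ring)
  have hψdiff : Differentiable ℝ ψ := fun t => (hψ t).differentiableAt
  have hanti : AntitoneOn ψ (Set.Icc (0 : ℝ) 1) := by
    apply antitoneOn_of_deriv_nonpos (convex_Icc 0 1) hψdiff.continuous.continuousOn
      hψdiff.differentiableOn
    intro t ht
    rw [interior_Icc] at ht
    rw [(hψ t).deriv]
    have h1 : ⟪gradient F (x + t • v), v⟫ - c1 = ⟪gradient F (x + t • v) - gradient F x, v⟫ := by
      rw [inner_sub_left]
    have h2 : ⟪gradient F (x + t • v) - gradient F x, v⟫ ≤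
        ‖gradient F (x + t • v) - gradient F x‖ * ‖v‖ := real_inner_le_norm _ _
    have h3 : ‖gradient F (x + t • v) - gradient F x‖ ≤ β * (t * ‖v‖) := by
      have := hsmooth (x + t • v) x
      simpa [norm_smul, abs_of_pos ht.1] using this
    have h4 : ‖gradient F (x + t • v) - gradient F x‖ * ‖v‖ ≤ β * (t * ‖v‖) * ‖v‖ :=
      mul_le_mul_of_nonneg_right h3 (norm_nonneg _)
    nlinarith [h1, h2, h4]
  have h01 := hanti (Set.left_mem_Icc.mpr zero_le_one) (Set.right_mem_Icc.mpr zero_le_one)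
    zero_le_one
  have h0 : ψ 0 = F x := by simp [hψdef]
  have h1 : ψ 1 = F y - c1 - β / 2 * ‖v‖ ^ 2 := by
    simp [hψdef, hv]
  rw [h0, h1] at h01
  linarith

lemma sumA {n : ℕ} (g : Fin n → E) (B : ℕ) :
    (n : ℝ) • (∑ s : Fin B → Fin n, ∑ j, g (s j)) =
      ((B : ℝ) * (n : ℝ) ^ B) • (∑ i, g i) := by
  induction B with
  | zero => simp
  | succ B ih =>
    have key : ∑ s : Fin (B + 1) → Fin n, ∑ j, g (s j) =
        ∑ p : Fin n × (Fin B → Fin n), (g p.1 + ∑ j, g (p.2 j)) := by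
      rw [← Equiv.sum_comp (Fin.consEquiv (fun _ => Fin n)) (fun s => ∑ j, g (s j))]
      apply Finset.sum_congr rfl
      intro p _
      simp [Fin.sum_univ_succ, Fin.consEquiv]
    have hcard : Fintype.card (Fin B → Fin n) = n ^ B := by
      simp [Fintype.card_fun]
    have hsplit : ∑ p : Fin n × (Fin B → Fin n), (g p.1 + ∑ j, g (p.2 j)) =
        ((n : ℝ) ^ B) • (∑ a, g a) + (n : ℝ) • (∑ t : Fin B → Fin n, ∑ j, g (t j)) := by
      rw [Fintype.sum_prod_type]
      simp only [Finset.sum_add_distrib, Finset.sum_const, Finset.card_univ, hcard,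
        Fintype.card_fin]
      rw [← Finset.smul_sum]
      rw [← Nat.cast_smul_eq_nsmul ℝ (n ^ B), ← Nat.cast_smul_eq_nsmul ℝ n]
      push_cast
      ring_nf
    rw [key, hsplit, smul_add, ih, smul_smul, smul_smul, ← add_smul]
    congr 1
    push_cast
    ring

lemma sumB {n : ℕ} (g : Fin n → E) (B : ℕ) :
    (n : ℝ) ^ 2 * (∑ s : Fin B → Fin n, ‖∑ j, g (s j)‖ ^ 2) =
      (B : ℝ) * (n : ℝ) ^ (B + 1) * (∑ i, ‖g i‖ ^ 2) +
        (B : ℝ) * ((B : ℝ) - 1) * (n : ℝ) ^ B * ‖∑ i, g i‖ ^ 2 := by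
  induction B with
  | zero => simp
  | succ B ih =>
    have key : ∑ s : Fin (B + 1) → Fin n, ‖∑ j, g (s j)‖ ^ 2 =
        ∑ p : Fin n × (Fin B → Fin n), ‖g p.1 + ∑ j, g (p.2 j)‖ ^ 2 := by
      rw [← Equiv.sum_comp (Fin.consEquiv (fun _ => Fin n)) (fun s => ‖∑ j, g (s j)‖ ^ 2)]
      apply Finset.sum_congr rfl
      intro p _
      congr 1
      simp [Fin.sum_univ_succ, Fin.consEquiv]
    have hcard : Fintype.card (Fin B → Fin n) = n ^ B := by
      simp [Fintype.card_fun]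
    have hTW : (n : ℝ) * ⟪∑ i, g i, ∑ t : Fin B → Fin n, ∑ j, g (t j)⟫ =
        (B : ℝ) * (n : ℝ) ^ B * ‖∑ i, g i‖ ^ 2 := by
      rw [← real_inner_smul_right, sumA g B, real_inner_smul_right,
        real_inner_self_eq_norm_sq]
      try ring
    have hexp : ∑ p : Fin n × (Fin B → Fin n), ‖g p.1 + ∑ j, g (p.2 j)‖ ^ 2 =
        (n : ℝ) ^ B * (∑ i, ‖g i‖ ^ 2) +
          2 * ⟪∑ i, g i, ∑ t : Fin B → Fin n, ∑ j, g (t j)⟫ +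
          (n : ℝ) * (∑ t : Fin B → Fin n, ‖∑ j, g (t j)‖ ^ 2) := by
      rw [Fintype.sum_prod_type]
      have e1 : ∀ a : Fin n, ∑ t : Fin B → Fin n, ‖g a + ∑ j, g (t j)‖ ^ 2 =
          (n : ℝ) ^ B * ‖g a‖ ^ 2 + 2 * ⟪g a, ∑ t : Fin B → Fin n, ∑ j, g (t j)⟫ +
            (∑ t : Fin B → Fin n, ‖∑ j, g (t j)‖ ^ 2) := by
        intro a
        simp only [norm_add_sq_real]
        rw [Finset.sum_add_distrib, Finset.sum_add_distrib, Finset.sum_const,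
          Finset.card_univ, hcard, nsmul_eq_mul, ← Finset.mul_sum, ← inner_sum]
        push_cast
        ring
      simp only [e1]
      rw [Finset.sum_add_distrib, Finset.sum_add_distrib, ← Finset.mul_sum,
        ← Finset.mul_sum, ← sum_inner, Finset.sum_const, Finset.card_univ,
        Fintype.card_fin, nsmul_eq_mul]
      try ring
    rw [key, hexp]
    push_cast
    linear_combination (2 * (n : ℝ)) * hTW + (n : ℝ) * ih

lemma gradient_avg' {n : ℕ} (f : Fin n → E → ℝ) (hf : ∀ i, Differentiable ℝ (f i)) (w : E) :
    gradient (fun w => (1 / (n : ℝ)) * ∑ i, f i w) w =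
      (1 / (n : ℝ)) • ∑ i, gradient (f i) w := by
  have hi : ∀ i : Fin n, HasFDerivAt (f i)
      (InnerProductSpace.toDual ℝ E (gradient (f i) w)) w :=
    fun i => hasGradientAt_iff_hasFDerivAt.mp ((hf i w).hasGradientAt)
  have hsum : HasFDerivAt (fun w => ∑ i, f i w)
      (∑ i, InnerProductSpace.toDual ℝ E (gradient (f i) w)) w :=
    HasFDerivAt.fun_sum (fun i _ => hi i)
  have hmul := hsum.const_mul (1 / (n : ℝ))
  have hgrad : HasGradientAt (fun w => (1 / (n : ℝ)) * ∑ i, f i w)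
      ((1 / (n : ℝ)) • ∑ i, gradient (f i) w) w := by
    rw [hasGradientAt_iff_hasFDerivAt, map_smul, map_sum]
    exact hmul
  exact hgrad.gradient

end Aux

/-- If `F` is `β`-smooth, then for every `w`, step size `γ > 0`, and batch
size `B ≥ 1`, the expected one-step mini-batch SGD descent satisfies
`E_s[F(w − γ g_s(w))] ≤ F(w) − γ‖∇F(w)‖² + (βγ²/2)·(M²(w)/B + ((B − 1)/B)·‖∇F(w)‖²)`. -/
theorem minibatch_descent_lemma
    (d n B : ℕ) (hd : 1 ≤ d) (hn : 1 ≤ n) (hB : 1 ≤ B)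
    (f : Fin n → EuclideanSpace ℝ (Fin d) → ℝ)
    (hf : ∀ i, Differentiable ℝ (f i))
    (F : EuclideanSpace ℝ (Fin d) → ℝ)
    (hF : F = fun w => (1 / (n : ℝ)) * ∑ i, f i w)
    (β : ℝ) (hβ : 0 < β)
    (hFdiff : Differentiable ℝ F)
    (hsmooth : ∀ x y, ‖gradient F x - gradient F y‖ ≤ β * ‖x - y‖)
    (w : EuclideanSpace ℝ (Fin d)) (γ : ℝ) (hγ : 0 < γ) :
    (1 / (n : ℝ) ^ B) *
        ∑ s : Fin B → Fin n,
          F (w - γ • ((1 / (B : ℝ)) • ∑ j, gradient (f (s j)) w))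
      ≤ F w - γ * ‖gradient F w‖ ^ 2 +
          (β * γ ^ 2 / 2) *
            (((1 / (n : ℝ)) * ∑ i, ‖gradient (f i) w‖ ^ 2) / (B : ℝ) +
              (((B : ℝ) - 1) / (B : ℝ)) * ‖gradient F w‖ ^ 2) := by
  have hn0 : (0 : ℝ) < n := by exact_mod_cast hn
  have hB0 : (0 : ℝ) < B := by exact_mod_cast hB
  have hG : gradient F w = (1 / (n : ℝ)) • ∑ i, gradient (f i) w := by
    rw [hF]; exact gradient_avg' f hf w
  have hT : ∑ i, gradient (f i) w = (n : ℝ) • gradient F w := by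
    rw [hG, smul_smul]
    rw [show (n : ℝ) * (1 / (n : ℝ)) = 1 by field_simp]
    rw [one_smul]
  have hT2 : ‖∑ i, gradient (f i) w‖ ^ 2 = (n : ℝ) ^ 2 * ‖gradient F w‖ ^ 2 := by
    rw [hT, norm_smul, Real.norm_eq_abs, abs_of_pos hn0, mul_pow]
  have hGT : ⟪gradient F w, ∑ i, gradient (f i) w⟫ = (n : ℝ) * ‖gradient F w‖ ^ 2 := by
    rw [hT, real_inner_smul_right, real_inner_self_eq_norm_sq]
  -- pointwise descent bound
  have hdesc : ∀ s : Fin B → Fin n,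
      F (w - γ • ((1 / (B : ℝ)) • ∑ j, gradient (f (s j)) w)) ≤
        F w - γ * ⟪gradient F w, (1 / (B : ℝ)) • ∑ j, gradient (f (s j)) w⟫ +
          β / 2 * (γ ^ 2 * ‖(1 / (B : ℝ)) • ∑ j, gradient (f (s j)) w‖ ^ 2) := by
    intro s
    set u := (1 / (B : ℝ)) • ∑ j, gradient (f (s j)) w with hu
    have hdd := descent_aux F β hFdiff hsmooth w (w - γ • u)
    have hy : (w - γ • u) - w = -(γ • u) := by abel
    rw [hy] at hdd
    have e1 : ⟪gradient F w, -(γ • u)⟫ = -(γ * ⟪gradient F w, u⟫) := by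
      rw [inner_neg_right, real_inner_smul_right]
    have e2 : ‖-(γ • u)‖ ^ 2 = γ ^ 2 * ‖u‖ ^ 2 := by
      rw [norm_neg, norm_smul, Real.norm_eq_abs, abs_of_pos hγ, mul_pow]
    rw [e1, e2] at hdd
    linarith
  -- expectation of the inner product term
  have hA : ∑ s : Fin B → Fin n, ⟪gradient F w, (1 / (B : ℝ)) • ∑ j, gradient (f (s j)) w⟫ =
      (n : ℝ) ^ B * ‖gradient F w‖ ^ 2 := by
    have h1 : ∑ s : Fin B → Fin n, ⟪gradient F w, (1 / (B : ℝ)) • ∑ j, gradient (f (s j)) w⟫ =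
        (1 / (B : ℝ)) * ⟪gradient F w, ∑ s : Fin B → Fin n, ∑ j, gradient (f (s j)) w⟫ := by
      rw [inner_sum]
      simp only [real_inner_smul_right]
      rw [Finset.mul_sum]
    have h2 := sumA (fun i => gradient (f i) w) B
    have h4 : (n : ℝ) * ⟪gradient F w, ∑ s : Fin B → Fin n, ∑ j, gradient (f (s j)) w⟫ =
        (B : ℝ) * (n : ℝ) ^ B * ((n : ℝ) * ‖gradient F w‖ ^ 2) := by
      rw [← real_inner_smul_right, h2, real_inner_smul_right, hGT]
      try ring
    have h5 : ⟪gradient F w, ∑ s : Fin B → Fin n, ∑ j, gradient (f (s j)) w⟫ =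
        (B : ℝ) * (n : ℝ) ^ B * ‖gradient F w‖ ^ 2 := by
      apply mul_left_cancel₀ hn0.ne'
      rw [h4]; ring
    rw [h1, h5]
    field_simp
  -- expectation of the squared norm term
  have hC : ∑ s : Fin B → Fin n, ‖(1 / (B : ℝ)) • ∑ j, gradient (f (s j)) w‖ ^ 2 =
      (n : ℝ) ^ B * (((1 / (n : ℝ)) * ∑ i, ‖gradient (f i) w‖ ^ 2) / (B : ℝ) +
        (((B : ℝ) - 1) / (B : ℝ)) * ‖gradient F w‖ ^ 2) := by
    have h1 : ∑ s : Fin B → Fin n, ‖(1 / (B : ℝ)) • ∑ j, gradient (f (s j)) w‖ ^ 2 =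
        (1 / (B : ℝ)) ^ 2 * ∑ s : Fin B → Fin n, ‖∑ j, gradient (f (s j)) w‖ ^ 2 := by
      rw [Finset.mul_sum]
      apply Finset.sum_congr rfl
      intro s _
      rw [norm_smul, Real.norm_eq_abs, abs_of_pos (by positivity : (0:ℝ) < 1 / (B:ℝ)), mul_pow]
    have h2 := sumB (fun i => gradient (f i) w) B
    rw [hT2] at h2
    rw [h1]
    have hS : ∑ s : Fin B → Fin n, ‖∑ j, gradient (f (s j)) w‖ ^ 2 =
        ((B : ℝ) * (n : ℝ) ^ (B + 1) * (∑ i, ‖gradient (f i) w‖ ^ 2) +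
          (B : ℝ) * ((B : ℝ) - 1) * (n : ℝ) ^ B * ((n : ℝ) ^ 2 * ‖gradient F w‖ ^ 2)) /
          (n : ℝ) ^ 2 := by
      rw [eq_div_iff (by positivity : ((n : ℝ) ^ 2) ≠ 0)]
      linear_combination h2
    rw [hS]
    field_simp
    ring
  -- summing up
  have hsum := Finset.sum_le_sum (fun s (_ : s ∈ Finset.univ) => hdesc s)
  have hcard : Fintype.card (Fin B → Fin n) = n ^ B := by simp [Fintype.card_fun]
  have hRHS : ∑ s : Fin B → Fin n,
      (F w - γ * ⟪gradient F w, (1 / (B : ℝ)) • ∑ j, gradient (f (s j)) w⟫ +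
        β / 2 * (γ ^ 2 * ‖(1 / (B : ℝ)) • ∑ j, gradient (f (s j)) w‖ ^ 2)) =
      (n : ℝ) ^ B * F w -
        γ * (∑ s : Fin B → Fin n, ⟪gradient F w, (1 / (B : ℝ)) • ∑ j, gradient (f (s j)) w⟫) +
        (β / 2 * γ ^ 2) *
          (∑ s : Fin B → Fin n, ‖(1 / (B : ℝ)) • ∑ j, gradient (f (s j)) w‖ ^ 2) := by
    rw [Finset.sum_add_distrib, Finset.sum_sub_distrib, Finset.sum_const, Finset.card_univ,
      hcard, nsmul_eq_mul, ← Finset.mul_sum]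
    have e : ∀ x : ℝ, β / 2 * (γ ^ 2 * x) = β / 2 * γ ^ 2 * x := fun x => by ring
    simp only [e, ← Finset.mul_sum]
    push_cast
    ring
  rw [hRHS, hA, hC] at hsum
  have hfin : (1 / (n : ℝ) ^ B) *
      ∑ s : Fin B → Fin n, F (w - γ • ((1 / (B : ℝ)) • ∑ j, gradient (f (s j)) w)) ≤
      (1 / (n : ℝ) ^ B) * ((n : ℝ) ^ B * F w - γ * ((n : ℝ) ^ B * ‖gradient F w‖ ^ 2) +
        (β / 2 * γ ^ 2) * ((n : ℝ) ^ B *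
          (((1 / (n : ℝ)) * ∑ i, ‖gradient (f i) w‖ ^ 2) / (B : ℝ) +
            (((B : ℝ) - 1) / (B : ℝ)) * ‖gradient F w‖ ^ 2))) := by
    apply mul_le_mul_of_nonneg_left hsum (by positivity)
  calc (1 / (n : ℝ) ^ B) *
      ∑ s : Fin B → Fin n, F (w - γ • ((1 / (B : ℝ)) • ∑ j, gradient (f (s j)) w)) ≤ _ := hfin
    _ = F w - γ * ‖gradient F w‖ ^ 2 +
          (β * γ ^ 2 / 2) *
            (((1 / (n : ℝ)) * ∑ i, ‖gradient (f i) w‖ ^ 2) / (B : ℝ) +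
              (((B : ℝ) - 1) / (B : ℝ)) * ‖gradient F w‖ ^ 2) := by
      have hnB : ((n : ℝ) ^ B) ≠ 0 := by positivity
      field_simp
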